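/- Let f : ℝⁿ → ℝ be L-smooth, bounded below with lower bound f⋆, and let x¹ satisfy f(x¹) - f⋆ ≤ Δ. Define x^{k+1} = x^k - t_k ∇f(x^k) for k = 1,…,N, with t_k ∈ (0, 2/L). Then min_{1≤k≤N+1} ‖∇f(x^k)‖ ≤ ( Δ / ( Σ_{k=1}^N t_k(1 - (L t_k)/2) + 1/(2L) ) )^{1/2}. -/

import Mathlib

open intervalIntegral in
lemma descent_lemma {n : ℕ} (f : EuclideanSpace ℝ (Fin n) → ℝ) (L : ℝ) (hL : 0 < L)
    (hf : Differentiable ℝ f)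
    (hlip : ∀ x y, ‖gradient f x - gradient f y‖ ≤ L * ‖x - y‖)
    (x y : EuclideanSpace ℝ (Fin n)) :
    f y ≤ f x + inner ℝ (gradient f x) (y - x) + L / 2 * ‖y - x‖ ^ 2 := by
  set v := y - x with hv
  have hcg : Continuous (gradient f) := by
    have : LipschitzWith (Real.toNNReal L) (gradient f) := by
      apply LipschitzWith.of_dist_le_mul
      intro a b
      simpa [dist_eq_norm, Real.coe_toNNReal L hL.le] using hlip a b
    exact this.continuous
  have hline : ∀ s : ℝ, HasDerivAt (fun s : ℝ => x + s • v) v s := fun s => by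
    simpa using ((hasDerivAt_id s).smul_const v).const_add x
  have hderiv : ∀ s : ℝ, HasDerivAt (fun s : ℝ => f (x + s • v))
      ((inner ℝ (gradient f (x + s • v)) v : ℝ)) s := by
    intro s
    have h1 : HasFDerivAt f _ (x + s • v) := ((hf (x + s • v)).hasGradientAt).hasFDerivAt
    have h2 := h1.comp_hasDerivAt s (hline s)
    rw [← InnerProductSpace.toDual_apply_apply]; exact h2
  have hcontd : Continuous fun s : ℝ => (inner ℝ (gradient f (x + s • v)) v : ℝ) := by
    exact Continuous.inner (hcg.comp (by continuity)) continuous_const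
  have hFTC : ∫ s in (0:ℝ)..1, (inner ℝ (gradient f (x + s • v)) v : ℝ) = f y - f x := by
    rw [intervalIntegral.integral_eq_sub_of_hasDerivAt (fun s _ => hderiv s)
      (hcontd.intervalIntegrable 0 1)]
    simp [hv]
  have hint2 : IntervalIntegrable (fun s : ℝ =>
      (inner ℝ (gradient f x) v : ℝ) + L * ‖v‖ ^ 2 * s) MeasureTheory.volume 0 1 :=
    (continuous_const.add (continuous_const.mul continuous_id')).intervalIntegrable 0 1
  have hmono : ∫ s in (0:ℝ)..1, (inner ℝ (gradient f (x + s • v)) v : ℝ) ≤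
      ∫ s in (0:ℝ)..1, ((inner ℝ (gradient f x) v : ℝ) + L * ‖v‖ ^ 2 * s) := by
    apply intervalIntegral.integral_mono_on zero_le_one (hcontd.intervalIntegrable 0 1) hint2
    intro s hs
    have key : (inner ℝ (gradient f (x + s • v) - gradient f x) v : ℝ) ≤ L * ‖v‖ ^ 2 * s := by
      calc (inner ℝ (gradient f (x + s • v) - gradient f x) v : ℝ)
          ≤ ‖gradient f (x + s • v) - gradient f x‖ * ‖v‖ := real_inner_le_norm _ _
        _ ≤ (L * ‖x + s • v - x‖) * ‖v‖ := by
            exact mul_le_mul_of_nonneg_right (hlip _ _) (norm_nonneg _)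
        _ = L * ‖v‖ ^ 2 * s := by
            have : ‖x + s • v - x‖ = s * ‖v‖ := by
              simp [norm_smul, Real.norm_eq_abs, abs_of_nonneg hs.1]
            rw [this]; ring
    have := inner_sub_left (𝕜 := ℝ) (gradient f (x + s • v)) (gradient f x) v
    linarith [key, this.symm.le, this.le]
  have hrhs : ∫ s in (0:ℝ)..1, ((inner ℝ (gradient f x) v : ℝ) + L * ‖v‖ ^ 2 * s) =
      (inner ℝ (gradient f x) v : ℝ) + L / 2 * ‖v‖ ^ 2 := by
    rw [intervalIntegral.integral_add (f := fun _ => (inner ℝ (gradient f x) v : ℝ))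
      (g := fun s : ℝ => L * ‖v‖ ^ 2 * s) (intervalIntegrable_const)
      ((continuous_const.mul continuous_id').intervalIntegrable 0 1)]
    have h1 : ∫ s in (0:ℝ)..1, L * ‖v‖ ^ 2 * s = L * ‖v‖ ^ 2 * ∫ s in (0:ℝ)..1, s :=
      intervalIntegral.integral_const_mul _ _
    rw [h1, integral_id, intervalIntegral.integral_const]
    norm_num
    ring
  rw [hFTC] at hmono
  rw [hrhs] at hmono
  linarith

theorem stmt_5 {n : ℕ} (f : EuclideanSpace ℝ (Fin n) → ℝ) (L : ℝ) (hL : 0 < L)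
    (hf : Differentiable ℝ f)
    (hlip : ∀ x y, ‖gradient f x - gradient f y‖ ≤ L * ‖x - y‖)
    (fstar : ℝ) (hlow : ∀ y, fstar ≤ f y)
    (Δ : ℝ) (hΔ : 0 < Δ) (N : ℕ)
    (t : ℕ → ℝ) (ht : ∀ k, 1 ≤ k → k ≤ N → t k ∈ Set.Ioo 0 (2 / L))
    (x : ℕ → EuclideanSpace ℝ (Fin n))
    (hinit : f (x 1) - fstar ≤ Δ)
    (hupd : ∀ k, 1 ≤ k → k ≤ N → x (k + 1) = x k - t k • gradient f (x k)) :
    ∃ k ∈ Finset.Icc 1 (N + 1),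
      ‖gradient f (x k)‖ ≤
        Real.sqrt (Δ / (∑ k ∈ Finset.Icc 1 N, t k * (1 - L * t k / 2) + 1 / (2 * L))) := by
  set g : ℕ → ℝ := fun k => ‖gradient f (x k)‖ with hg
  -- step bound
  have hdesc : ∀ k, 1 ≤ k → k ≤ N →
      f (x (k+1)) ≤ f (x k) - t k * (1 - L * t k / 2) * g k ^ 2 := by
    intro k hk1 hk2
    have h := descent_lemma f L hL hf hlip (x k) (x (k+1))
    have e : x (k+1) - x k = -(t k • gradient f (x k)) := by
      rw [hupd k hk1 hk2]; abel
    rw [e] at h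
    have e1 : (inner ℝ (gradient f (x k)) (-(t k • gradient f (x k))) : ℝ) = -(t k * g k ^ 2) := by
      rw [inner_neg_right, real_inner_smul_right, real_inner_self_eq_norm_sq]
    have e2 : ‖-(t k • gradient f (x k))‖ ^ 2 = t k ^ 2 * g k ^ 2 := by
      rw [norm_neg, norm_smul, Real.norm_eq_abs, abs_of_pos (ht k hk1 hk2).1, mul_pow]
    rw [e1, e2] at h
    nlinarith [h]
  -- last point bound
  have hlast : fstar ≤ f (x (N+1)) - 1/(2*L) * g (N+1) ^ 2 := by
    have h := descent_lemma f L hL hf hlip (x (N+1))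
      (x (N+1) - (1/L) • gradient f (x (N+1)))
    have hl := hlow (x (N+1) - (1/L) • gradient f (x (N+1)))
    have e : x (N+1) - (1/L) • gradient f (x (N+1)) - x (N+1)
        = -((1/L) • gradient f (x (N+1))) := by abel
    rw [e] at h
    have e1 : (inner ℝ (gradient f (x (N+1))) (-((1/L) • gradient f (x (N+1)))) : ℝ)
        = -((1/L) * g (N+1) ^ 2) := by
      rw [inner_neg_right, real_inner_smul_right, real_inner_self_eq_norm_sq]
    have e2 : ‖-((1/L) • gradient f (x (N+1)))‖ ^ 2 = (1/L) ^ 2 * g (N+1) ^ 2 := by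
      rw [norm_neg, norm_smul, Real.norm_eq_abs, abs_of_pos (by positivity), mul_pow]
    rw [e1, e2] at h
    have hL2 : L / 2 * ((1/L)^2 * g (N+1) ^ 2) - (1/L) * g (N+1) ^ 2
        = -(1/(2*L) * g (N+1) ^ 2) := by
      field_simp; ring
    nlinarith [h, hl]
  -- telescoping
  have htel : ∀ M, M ≤ N →
      f (x (M+1)) + ∑ k ∈ Finset.Icc 1 M, t k * (1 - L * t k / 2) * g k ^ 2 ≤ f (x 1) := by
    intro M
    induction M with
    | zero => intro _; simp
    | succ m ih =>
      intro hm
      rw [Finset.sum_Icc_succ_top (by omega : 1 ≤ m + 1)]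
      have h1 := hdesc (m+1) (by omega) hm
      have h2 := ih (by omega)
      linarith
  have hsum : ∑ k ∈ Finset.Icc 1 N, t k * (1 - L * t k / 2) * g k ^ 2
      + 1/(2*L) * g (N+1) ^ 2 ≤ Δ := by
    have := htel N le_rfl
    linarith
  -- minimum
  obtain ⟨k0, hk0mem, hk0min⟩ := Finset.exists_min_image (Finset.Icc 1 (N+1))
    (fun k => g k) ⟨1, by simp⟩
  refine ⟨k0, hk0mem, ?_⟩
  set S : ℝ := ∑ k ∈ Finset.Icc 1 N, t k * (1 - L * t k / 2) + 1 / (2 * L) with hS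
  have hcpos : ∀ k ∈ Finset.Icc 1 N, 0 < t k * (1 - L * t k / 2) := by
    intro k hk
    simp only [Finset.mem_Icc] at hk
    obtain ⟨ht1, ht2⟩ := ht k hk.1 hk.2
    have : t k * L < 2 := by
      rw [lt_div_iff₀ hL] at ht2; linarith
    nlinarith
  have hSpos : 0 < S := by
    have h1 : (0:ℝ) ≤ ∑ k ∈ Finset.Icc 1 N, t k * (1 - L * t k / 2) :=
      Finset.sum_nonneg fun k hk => (hcpos k hk).le
    have h2 : (0:ℝ) < 1 / (2 * L) := by positivity
    rw [hS]
    linarith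
  have hm0 : 0 ≤ g k0 := norm_nonneg _
  have hmS : S * g k0 ^ 2 ≤ Δ := by
    have hterm : ∑ k ∈ Finset.Icc 1 N, t k * (1 - L * t k / 2) * g k0 ^ 2
        ≤ ∑ k ∈ Finset.Icc 1 N, t k * (1 - L * t k / 2) * g k ^ 2 := by
      apply Finset.sum_le_sum
      intro k hk
      have hle : g k0 ≤ g k := by
        apply hk0min
        simp only [Finset.mem_Icc] at hk ⊢; omega
      have : g k0 ^ 2 ≤ g k ^ 2 := by nlinarith [norm_nonneg (gradient f (x k))]
      exact mul_le_mul_of_nonneg_left this (hcpos k hk).le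
    have hlastle : g k0 ≤ g (N+1) := hk0min (N+1) (by simp)
    have h2 : 1/(2*L) * g k0 ^ 2 ≤ 1/(2*L) * g (N+1) ^ 2 := by
      have : g k0 ^ 2 ≤ g (N+1) ^ 2 := by nlinarith [norm_nonneg (gradient f (x (N+1)))]
      exact mul_le_mul_of_nonneg_left this (by positivity)
    calc S * g k0 ^ 2
        = ∑ k ∈ Finset.Icc 1 N, t k * (1 - L * t k / 2) * g k0 ^ 2
          + 1/(2*L) * g k0 ^ 2 := by
          rw [hS, add_mul, Finset.sum_mul]
      _ ≤ ∑ k ∈ Finset.Icc 1 N, t k * (1 - L * t k / 2) * g k ^ 2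
          + 1/(2*L) * g (N+1) ^ 2 := by linarith
      _ ≤ Δ := hsum
  have : g k0 ^ 2 ≤ Δ / S := by
    rw [le_div_iff₀ hSpos]; linarith [hmS]
  calc g k0 ≤ Real.sqrt (g k0 ^ 2) := by rw [Real.sqrt_sq hm0]
    _ ≤ Real.sqrt (Δ / S) := Real.sqrt_le_sqrt this
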